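/- Let 0 < γ < β ≤ 1 and φ(x) = (1+β-γ-βx)x. Then φ maps the interval (0,1] into itself, and for every x₀ ∈ (0,1] the sequence of iterates φ^(k)(x₀) converges to 1 - γ/β. -/

import Mathlib

theorem infection_fraction_map_convergence
    (β γ : ℝ) (hγ : 0 < γ) (hγβ : γ < β) (hβ : β ≤ 1)
    (φ : ℝ → ℝ) (hφ : ∀ x, φ x = (1 + β - γ - β * x) * x) :
    (∀ x ∈ Set.Ioc (0:ℝ) 1, φ x ∈ Set.Ioc (0:ℝ) 1) ∧
    (∀ x ∈ Set.Ioc (0:ℝ) 1,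
      Filter.Tendsto (fun k => φ^[k] x) Filter.atTop (nhds (1 - γ / β))) := by
  have hβ0 : 0 < β := lt_trans hγ hγβ
  set L : ℝ := 1 - γ / β with hLdef
  have hβL : β * L = β - γ := by rw [hLdef, mul_sub, mul_one, mul_div_assoc', mul_div_cancel_left₀ γ hβ0.ne']
  have hL0 : 0 < L := by
    have : γ / β < 1 := (div_lt_one hβ0).2 hγβ
    simp [hLdef]; linarith
  have hL1 : L ≤ 1 := by
    have : 0 < γ / β := div_pos hγ hβ0
    simp [hLdef]; linarith
  have key : ∀ x, φ x - L = (x - L) * (1 - β * x) := by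
    intro x; rw [hφ, hLdef]; field_simp; ring
  have key2 : ∀ x, φ x - x = β * x * (L - x) := by
    intro x; rw [hφ, hLdef]; field_simp; ring
  have inv : ∀ x ∈ Set.Ioc (0:ℝ) 1, φ x ∈ Set.Ioc (0:ℝ) 1 := by
    intro x hx
    obtain ⟨hx0, hx1⟩ := hx
    have hbx : β * x ≤ 1 := by nlinarith
    constructor
    · rw [hφ]; nlinarith
    · rw [hφ]
      nlinarith [mul_nonneg (sub_nonneg.2 hx1) (sub_nonneg.2 hbx), mul_pos hγ hx0]
  refine ⟨inv, ?_⟩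
  intro x hx
  obtain ⟨hx0, hx1⟩ := hx
  set m : ℝ := min x L with hmdef
  have hm0 : 0 < m := lt_min hx0 hL0
  have hmL : m ≤ L := min_le_right _ _
  have hmx : m ≤ x := min_le_left _ _
  have hm1 : m ≤ 1 := le_trans hmL hL1
  have bounds : ∀ k, m ≤ φ^[k] x ∧ φ^[k] x ≤ 1 := by
    intro k
    induction k with
    | zero => simpa using ⟨hmx, hx1⟩
    | succ k ih =>
      obtain ⟨h1, h2⟩ := ih
      set y := φ^[k] x with hy
      have hy0 : 0 < y := lt_of_lt_of_le hm0 h1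
      have hby : β * y ≤ 1 := by nlinarith
      have hupper : φ y ≤ 1 := (inv y ⟨hy0, h2⟩).2
      have hlower : m ≤ φ y := by
        rcases le_or_gt y L with hc | hc
        · have := key2 y
          nlinarith [mul_nonneg (mul_pos hβ0 hy0).le (sub_nonneg.2 hc)]
        · have := key y
          nlinarith
      rw [Function.iterate_succ_apply']
      exact ⟨hlower, hupper⟩
  set q : ℝ := 1 - β * m with hqdef
  have hq0 : 0 ≤ q := by
    have : β * m ≤ 1 := by nlinarith
    simp [hqdef]; linarith
  have hq1 : q < 1 := by
    have : 0 < β * m := mul_pos hβ0 hm0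
    simp [hqdef]; linarith
  have err : ∀ k, |φ^[k] x - L| ≤ |x - L| * q ^ k := by
    intro k
    induction k with
    | zero => simp
    | succ k ih =>
      set y := φ^[k] x with hy
      have h1 : m ≤ y := (bounds k).1
      have h2 : y ≤ 1 := (bounds k).2
      have hby : β * y ≤ 1 := by nlinarith
      have hfac : |1 - β * y| ≤ q := by
        rw [abs_of_nonneg (by linarith)]
        simp [hqdef]; nlinarith
      rw [Function.iterate_succ_apply', key y, abs_mul]
      calc |y - L| * |1 - β * y| ≤ (|x - L| * q ^ k) * q := by
            apply mul_le_mul ih hfac (abs_nonneg _)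
            positivity
        _ = |x - L| * q ^ (k + 1) := by ring
  have hto : Filter.Tendsto (fun k => |x - L| * q ^ k) Filter.atTop (nhds 0) := by
    have := (tendsto_pow_atTop_nhds_zero_of_lt_one hq0 hq1).const_mul |x - L|
    simpa using this
  have habs : Filter.Tendsto (fun k => |φ^[k] x - L|) Filter.atTop (nhds 0) :=
    squeeze_zero (fun k => abs_nonneg _) err hto
  rw [tendsto_iff_dist_tendsto_zero]
  simpa [Real.dist_eq] using habs
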